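/- Let E be a real Banach space, let r be a real number, and let G : E → E be a map that is differentiable at every point of E \ {0}. Then the following are equivalent: (i) G is positively homogeneous of degree r, i.e. G(λ • v) = λ^r • G(v) for all real λ > 0 and all v ≠ 0; (ii) (fderiv ℝ G v)(v) = r • G(v) for all v ∈ E \ {0}. -/

import Mathlib

/-- Euler's theorem for positively homogeneous maps on a real Banach space:
for `G : E → E` differentiable away from the origin, positive homogeneity of
degree `r` is equivalent to the Euler identity `(fderiv ℝ G v) v = r • G v`. -/
theorem euler_homogeneous_iff
    {E : Type*} [NormedAddCommGroup E] [NormedSpace ℝ E] [CompleteSpace E]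
    (r : ℝ) (G : E → E)
    (hG : ∀ v : E, v ≠ 0 → DifferentiableAt ℝ G v) :
    (∀ l : ℝ, 0 < l → ∀ v : E, v ≠ 0 → G (l • v) = l ^ r • G v) ↔
      (∀ v : E, v ≠ 0 → fderiv ℝ G v v = r • G v) := by
  constructor
  · intro h v hv
    -- derivative of l ↦ l • v at 1 is v
    have hsv : HasDerivAt (fun l : ℝ => l • v) v 1 := by
      simpa using (hasDerivAt_id (1:ℝ)).smul_const v
    have h1 : HasDerivAt (fun l : ℝ => G (l • v)) (fderiv ℝ G v v) 1 := by
      have hfd : HasFDerivAt G (fderiv ℝ G v) ((1:ℝ) • v) := by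
        simpa using (hG v hv).hasFDerivAt
      simpa [Function.comp_def] using hfd.comp_hasDerivAt 1 hsv
    have h2 : HasDerivAt (fun l : ℝ => l ^ r • G v) (r • G v) 1 := by
      have := (Real.hasDerivAt_rpow_const (x := (1:ℝ)) (p := r)
        (Or.inl one_ne_zero)).smul_const (G v)
      simpa using this
    have heq : (fun l : ℝ => G (l • v)) =ᶠ[nhds (1:ℝ)] fun l => l ^ r • G v := by
      filter_upwards [Ioi_mem_nhds (show (0:ℝ) < 1 by norm_num)] with l hl
      exact h l hl v hv
    have h2' : HasDerivAt (fun l : ℝ => G (l • v)) (r • G v) 1 :=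
      h2.congr_of_eventuallyEq heq
    exact h1.unique h2'
  · intro h l hl v hv
    set F : ℝ → E := fun t => t ^ (-r) • G (t • v) with hF
    have key : ∀ t : ℝ, t ∈ Set.Ioi (0:ℝ) → HasDerivAt F 0 t := by
      intro t ht
      have ht0 : (0:ℝ) < t := ht
      have htv : t • v ≠ 0 := smul_ne_zero (ne_of_gt ht0) hv
      have hsv : HasDerivAt (fun s : ℝ => s • v) v t := by
        simpa using (hasDerivAt_id t).smul_const v
      have hGc : HasDerivAt (fun s : ℝ => G (s • v)) (fderiv ℝ G (t • v) v) t := by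
        simpa [Function.comp_def] using ((hG _ htv).hasFDerivAt.comp_hasDerivAt t hsv)
      have hpow : HasDerivAt (fun s : ℝ => s ^ (-r)) (-r * t ^ (-r - 1)) t :=
        Real.hasDerivAt_rpow_const (Or.inl (ne_of_gt ht0))
      have hprod := hpow.smul hGc
      -- compute fderiv G (t•v) v
      have hlin : fderiv ℝ G (t • v) (t • v) = t • fderiv ℝ G (t • v) v := by
        simp [map_smul]
      have heuler : fderiv ℝ G (t • v) (t • v) = r • G (t • v) := h _ htv
      have hv' : fderiv ℝ G (t • v) v = (r / t) • G (t • v) := by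
        have : t • fderiv ℝ G (t • v) v = r • G (t • v) := by rw [← hlin, heuler]
        have := congrArg (fun x => t⁻¹ • x) this
        simpa [smul_smul, inv_mul_cancel₀ (ne_of_gt ht0), div_eq_inv_mul] using this
      rw [hv'] at hprod
      have hzero : t ^ (-r) • (r / t) • G (t • v) + (-r * t ^ (-r - 1)) • G (t • v) = 0 := by
        rw [smul_smul, ← add_smul]
        have : t ^ (-r) * (r / t) + -r * t ^ (-r - 1) = 0 := by
          rw [Real.rpow_sub ht0, Real.rpow_one]
          field_simp
          ring
        rw [this, zero_smul]
      rw [hzero] at hprod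
      exact hprod
    have hconv : Convex ℝ (Set.Ioi (0:ℝ)) := convex_Ioi 0
    have hbound : ∀ t ∈ Set.Ioi (0:ℝ), ‖(0:E)‖ ≤ 0 := by simp
    have hFd : ∀ t ∈ Set.Ioi (0:ℝ), HasDerivWithinAt F ((fun _ => (0:E)) t) (Set.Ioi 0) t :=
      fun t ht => (key t ht).hasDerivWithinAt
    have h1 : (1:ℝ) ∈ Set.Ioi (0:ℝ) := by norm_num
    have hl' : l ∈ Set.Ioi (0:ℝ) := hl
    have := hconv.norm_image_sub_le_of_norm_hasDerivWithin_le hFd hbound h1 hl'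
    have hFeq : F l = F 1 := by
      have h0 : ‖F l - F 1‖ ≤ 0 := by simpa using this
      exact sub_eq_zero.mp (norm_le_zero_iff.mp h0)
    have hF1 : F 1 = G v := by simp [hF]
    have hFl : l ^ (-r) • G (l • v) = G v := by rw [← hF1]; exact hFeq
    have := congrArg (fun x => l ^ r • x) hFl
    simpa [smul_smul, ← Real.rpow_add hl] using this
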